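/- Let a₁ > a₂ ≥ 0 be integers and let x ∈ [0, 2^{−a₂}). Then w_{2^{a₁}+2^{a₂},0,2}(x) = 2^{a₂/2}·w_{2^{a₁−a₂}+1,0,2}(2^{a₂}x), W_{2^{a₁}+2^{a₂},0,2}(x) = 2^{−a₂/2}·W_{2^{a₁−a₂}+1,0,2}(2^{a₂}x), and W̃_{2^{a₁}+2^{a₂},0,2}(x) = 2^{−3a₂/2}·W̃_{2^{a₁−a₂}+1,0,2}(2^{a₂}x). -/

import Mathlib

open scoped Classical
open MeasureTheory

noncomputable section

/-- The binary digit `ξ_{i+1}` of `x ∈ [0,1)`. -/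
def rdigit (x : ℝ) (i : ℕ) : ℕ := (⌊x * 2 ^ (i + 1)⌋).toNat % 2

/-- The `k`-th Walsh function in base `2`. -/
def walsh (k : ℕ) (x : ℝ) : ℝ :=
  (-1 : ℝ) ^ ∑ i ∈ Finset.range (Nat.size k), (Nat.testBit k i).toNat * rdigit x i

/-- The order-2 localized Walsh function `w_{k,m,2}` for `k = 2^{a₁} + 2^{a₂} ∈ N₂∖N₁`. -/
def locw (a₁ a₂ m : ℕ) (x : ℝ) : ℝ :=
  Real.sqrt (2 ^ a₂) *
    Set.indicator (Set.Ico ((m : ℝ) / 2 ^ a₂) (((m : ℝ) + 1) / 2 ^ a₂)) (fun _ => (1:ℝ)) x *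
    walsh (2 ^ a₁ + 2 ^ a₂) x

/-- The cumulated function `W_{k,m,2}`. -/
def Wcum (a₁ a₂ m : ℕ) (x : ℝ) : ℝ := ∫ y in (0:ℝ)..x, locw a₁ a₂ m y

/-- The twice cumulated function `W̃_{k,m,2}`. -/
def Wtil (a₁ a₂ m : ℕ) (x : ℝ) : ℝ := ∫ y in (0:ℝ)..x, Wcum a₁ a₂ m y

lemma rdigit_pow_mul (a i : ℕ) (x : ℝ) : rdigit (2 ^ a * x) i = rdigit x (i + a) := by
  unfold rdigit
  congr 3
  rw [show i + a + 1 = (i + 1) + a from by ring, pow_add]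
  ring

lemma size_two_pow_add {a b : ℕ} (h : b < a) : Nat.size (2 ^ a + 2 ^ b) = a + 1 := by
  apply le_antisymm
  · rw [Nat.size_le]
    calc 2 ^ a + 2 ^ b < 2 ^ a + 2 ^ a := by
          gcongr
          · exact one_lt_two
    _ = 2 ^ (a + 1) := by rw [pow_succ]; ring
  · rw [Nat.succ_le, Nat.lt_size]
    exact Nat.le_add_right _ _

lemma testBit_two_pow_add {a b : ℕ} (h : b < a) (i : ℕ) :
    Nat.testBit (2 ^ a + 2 ^ b) i = (decide (i = a) || decide (i = b)) := by
  rcases lt_trichotomy i a with hi | hi | hi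
  · rw [Nat.testBit_two_pow_add_gt hi, Nat.testBit_two_pow]
    simp [Nat.ne_of_lt hi, eq_comm]
  · subst hi
    rw [Nat.testBit_two_pow_add_eq, Nat.testBit_two_pow_of_ne (Nat.ne_of_lt h)]
    simp
  · rw [Nat.testBit_lt_two_pow]
    · simp [Nat.ne_of_gt hi, Nat.ne_of_gt (h.trans hi)]
    · calc 2 ^ a + 2 ^ b < 2 ^ a + 2 ^ a := by gcongr; exact one_lt_two
      _ = 2 ^ (a + 1) := by rw [pow_succ]; ring
      _ ≤ 2 ^ i := Nat.pow_le_pow_right (by norm_num) hi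

lemma walsh_two_pow_add {a b : ℕ} (h : b < a) (x : ℝ) :
    walsh (2 ^ a + 2 ^ b) x = (-1 : ℝ) ^ (rdigit x a + rdigit x b) := by
  unfold walsh
  congr 1
  rw [size_two_pow_add h]
  have hsub : ({a, b} : Finset ℕ) ⊆ Finset.range (a + 1) := by
    intro i hi
    simp only [Finset.mem_insert, Finset.mem_singleton] at hi
    rcases hi with rfl | rfl
    · simp
    · simp [Nat.lt_succ_of_lt h]
  rw [← Finset.sum_subset hsub]
  · rw [Finset.sum_pair (Nat.ne_of_gt h)]
    rw [testBit_two_pow_add h a, testBit_two_pow_add h b]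
    simp [Nat.ne_of_gt h, Nat.ne_of_lt h]
  · intro i _ hi
    simp only [Finset.mem_insert, Finset.mem_singleton, not_or] at hi
    rw [testBit_two_pow_add h i]
    simp [hi.1, hi.2]

lemma locw_scale (a₁ a₂ : ℕ) (h : a₂ < a₁) (x : ℝ) :
    locw a₁ a₂ 0 x = Real.sqrt (2 ^ a₂) * locw (a₁ - a₂) 0 0 (2 ^ a₂ * x) := by
  have hpos : (0:ℝ) < 2 ^ a₂ := by positivity
  unfold locw
  have hsub : 0 < a₁ - a₂ := Nat.sub_pos_of_lt h
  have hwal : walsh (2 ^ a₁ + 2 ^ a₂) x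
      = walsh (2 ^ (a₁ - a₂) + 2 ^ 0) (2 ^ a₂ * x) := by
    rw [walsh_two_pow_add h x, walsh_two_pow_add hsub]
    rw [rdigit_pow_mul, rdigit_pow_mul, Nat.sub_add_cancel h.le, Nat.zero_add]
  have hind : Set.indicator (Set.Ico ((0:ℕ) / (2:ℝ) ^ a₂) (((0:ℕ) + 1) / 2 ^ a₂))
        (fun _ => (1:ℝ)) x
      = Set.indicator (Set.Ico ((0:ℕ) / (2:ℝ) ^ 0) (((0:ℕ) + 1) / 2 ^ 0))
        (fun _ => (1:ℝ)) (2 ^ a₂ * x) := by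
    rw [Set.indicator_apply, Set.indicator_apply]
    congr 1
    simp only [Set.mem_Ico, Nat.cast_zero, zero_add, zero_div, pow_zero, div_one, eq_iff_iff]
    constructor
    · rintro ⟨h1, h2⟩
      constructor
      · positivity
      · rw [mul_comm, ← lt_div_iff₀ hpos]; exact h2
    · rintro ⟨h1, h2⟩
      constructor
      · nlinarith
      · rw [lt_div_iff₀ hpos, mul_comm]; exact h2
  rw [hwal, hind]
  simp only [pow_zero, Real.sqrt_one]
  ring

lemma Wcum_scale (a₁ a₂ : ℕ) (h : a₂ < a₁) (x : ℝ) :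
    Wcum a₁ a₂ 0 x = (Real.sqrt (2 ^ a₂))⁻¹ * Wcum (a₁ - a₂) 0 0 (2 ^ a₂ * x) := by
  have hpos : (0:ℝ) < 2 ^ a₂ := by positivity
  have hs : (0:ℝ) < Real.sqrt (2 ^ a₂) := Real.sqrt_pos.mpr hpos
  have hsq : Real.sqrt (2 ^ a₂) * Real.sqrt (2 ^ a₂) = 2 ^ a₂ :=
    Real.mul_self_sqrt hpos.le
  unfold Wcum
  have := intervalIntegral.integral_comp_mul_left (a := (0:ℝ)) (b := x)
    (f := fun y => locw (a₁ - a₂) 0 0 y) (c := (2:ℝ) ^ a₂) (ne_of_gt hpos)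
  calc (∫ y in (0:ℝ)..x, locw a₁ a₂ 0 y)
      = ∫ y in (0:ℝ)..x, Real.sqrt (2 ^ a₂) * locw (a₁ - a₂) 0 0 (2 ^ a₂ * y) := by
        apply intervalIntegral.integral_congr
        intro y _
        exact locw_scale a₁ a₂ h y
    _ = Real.sqrt (2 ^ a₂) * ∫ y in (0:ℝ)..x, locw (a₁ - a₂) 0 0 (2 ^ a₂ * y) := by
        rw [← intervalIntegral.integral_const_mul]
    _ = Real.sqrt (2 ^ a₂) * (((2:ℝ) ^ a₂)⁻¹ *
          ∫ y in (0:ℝ)..(2 ^ a₂ * x), locw (a₁ - a₂) 0 0 y) := by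
        rw [this]; rw [mul_zero]; simp [smul_eq_mul]
    _ = (Real.sqrt (2 ^ a₂))⁻¹ * ∫ y in (0:ℝ)..(2 ^ a₂ * x), locw (a₁ - a₂) 0 0 y := by
        rw [← mul_assoc]
        congr 1
        field_simp
        exact Real.sq_sqrt hpos.le

lemma Wtil_scale (a₁ a₂ : ℕ) (h : a₂ < a₁) (x : ℝ) :
    Wtil a₁ a₂ 0 x = (2 ^ a₂ * Real.sqrt (2 ^ a₂))⁻¹ * Wtil (a₁ - a₂) 0 0 (2 ^ a₂ * x) := by
  have hpos : (0:ℝ) < 2 ^ a₂ := by positivity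
  have hs : (0:ℝ) < Real.sqrt (2 ^ a₂) := Real.sqrt_pos.mpr hpos
  unfold Wtil
  have := intervalIntegral.integral_comp_mul_left (a := (0:ℝ)) (b := x)
    (f := fun y => Wcum (a₁ - a₂) 0 0 y) (c := (2:ℝ) ^ a₂) (ne_of_gt hpos)
  calc (∫ y in (0:ℝ)..x, Wcum a₁ a₂ 0 y)
      = ∫ y in (0:ℝ)..x, (Real.sqrt (2 ^ a₂))⁻¹ * Wcum (a₁ - a₂) 0 0 (2 ^ a₂ * y) := by
        apply intervalIntegral.integral_congr
        intro y _
        exact Wcum_scale a₁ a₂ h y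
    _ = (Real.sqrt (2 ^ a₂))⁻¹ * ∫ y in (0:ℝ)..x, Wcum (a₁ - a₂) 0 0 (2 ^ a₂ * y) := by
        rw [← intervalIntegral.integral_const_mul]
    _ = (Real.sqrt (2 ^ a₂))⁻¹ * (((2:ℝ) ^ a₂)⁻¹ *
          ∫ y in (0:ℝ)..(2 ^ a₂ * x), Wcum (a₁ - a₂) 0 0 y) := by
        rw [this]; rw [mul_zero]; simp [smul_eq_mul]
    _ = (2 ^ a₂ * Real.sqrt (2 ^ a₂))⁻¹ *
          ∫ y in (0:ℝ)..(2 ^ a₂ * x), Wcum (a₁ - a₂) 0 0 y := by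
        rw [← mul_assoc, mul_inv, mul_comm ((2:ℝ) ^ a₂)⁻¹]

theorem stmt18 (a₁ a₂ : ℕ) (h : a₂ < a₁) :
    ∀ x ∈ Set.Ico (0:ℝ) (1 / 2 ^ a₂),
      locw a₁ a₂ 0 x = Real.sqrt (2 ^ a₂) * locw (a₁ - a₂) 0 0 (2 ^ a₂ * x) ∧
      Wcum a₁ a₂ 0 x = (Real.sqrt (2 ^ a₂))⁻¹ * Wcum (a₁ - a₂) 0 0 (2 ^ a₂ * x) ∧
      Wtil a₁ a₂ 0 x = (2 ^ a₂ * Real.sqrt (2 ^ a₂))⁻¹ * Wtil (a₁ - a₂) 0 0 (2 ^ a₂ * x) := by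
  intro x _
  exact ⟨locw_scale a₁ a₂ h x, Wcum_scale a₁ a₂ h x, Wtil_scale a₁ a₂ h x⟩

end
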